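/- (Single-layer convergence of Model 2 bounds to true extrema.) Let σ : ℝ → ℝ be nondecreasing and L_σ-Lipschitz, W ∈ ℝ^{m×n}, b ∈ ℝ^m, x_0 ∈ ℝ^n, ε > 0. For a neuron j, let z^lo_j := ((W)_+ (x_0 − ε·1) + (W)_− (x_0 + ε·1) + b)_j and z^hi_j := ((W)_+ (x_0 + ε·1) + (W)_− (x_0 − ε·1) + b)_j. Let M_0 < ⋯ < M_n be segment boundaries with mesh Δ such that [z^lo_j, z^hi_j] ⊆ [M_0, M_n], let i^hi be a segment index with z^hi_j ∈ [M_{i^hi−1}, M_{i^hi}], and set ū_j := sup of σ on [M_{i^hi−1}, M_{i^hi}]. Then sup over ‖x − x_0‖_∞ ≤ ε of σ((Wx+b)_j) ≤ ū_j ≤ that supremum + L_σ Δ; analogously, the segment-infimum at the segment containing z^lo_j is within L_σ Δ below the true infimum of σ((Wx+b)_j) over the ball. -/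

import Mathlib

open scoped NNReal

/-- Entrywise positive part of a matrix: `(W_+)_{jk} = max(W_{jk}, 0)`. -/
def matPos {m n : ℕ} (W : Matrix (Fin m) (Fin n) ℝ) : Matrix (Fin m) (Fin n) ℝ :=
  Matrix.of fun i j => max (W i j) 0

/-- Entrywise negative part of a matrix: `(W_−)_{jk} = min(W_{jk}, 0)`. -/
def matNeg {m n : ℕ} (W : Matrix (Fin m) (Fin n) ℝ) : Matrix (Fin m) (Fin n) ℝ :=
  Matrix.of fun i j => min (W i j) 0

lemma lip_mono_sub' {σ : ℝ → ℝ} {L : ℝ≥0} (hσ : LipschitzWith L σ) {a b : ℝ} (hab : a ≤ b) :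
    σ b - σ a ≤ (L : ℝ) * (b - a) := by
  have h := hσ.dist_le_mul a b
  rw [Real.dist_eq, Real.dist_eq] at h
  have h1 : σ b - σ a ≤ |σ a - σ b| := by rw [abs_sub_comm]; exact le_abs_self _
  have h2 : |a - b| = b - a := by rw [abs_sub_comm]; exact abs_of_nonneg (by linarith)
  rw [h2] at h
  linarith


/-- Single-layer convergence of Model 2 bounds to the true extrema: for a nondecreasing
`L_σ`-Lipschitz activation `σ`, neuron `j`, sign-split pre-activation bounds
`z^lo_j, z^hi_j` over the ℓ∞-ball of radius `ε` around `x_0`, and a segmentation of mesh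
`Δ` covering `[z^lo_j, z^hi_j]`, the segment supremum `ū_j` at the segment containing
`z^hi_j` overestimates the true supremum of `σ((Wx+b)_j)` over the ball by at most
`L_σ Δ`, and the segment infimum at the segment containing `z^lo_j` underestimates the
true infimum by at most `L_σ Δ`. -/
theorem single_layer_model2_convergence {m n : ℕ}
    (σ : ℝ → ℝ) (hmono : Monotone σ) (Lσ : ℝ≥0) (hσ : LipschitzWith Lσ σ)
    (W : Matrix (Fin m) (Fin n) ℝ) (b : Fin m → ℝ) (x0 : Fin n → ℝ) (ε : ℝ) (hε : 0 < ε)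
    (j : Fin m)
    (zlo zhi : ℝ)
    (hzlo : zlo = ((matPos W).mulVec (fun k => x0 k - ε)
      + (matNeg W).mulVec (fun k => x0 k + ε) + b) j)
    (hzhi : zhi = ((matPos W).mulVec (fun k => x0 k + ε)
      + (matNeg W).mulVec (fun k => x0 k - ε) + b) j)
    (nseg : ℕ) (hn : 0 < nseg) (M : Fin (nseg + 1) → ℝ) (hM : StrictMono M)
    (Δ : ℝ)
    (hΔ : Δ = Finset.univ.sup' ⟨⟨0, hn⟩, Finset.mem_univ _⟩
      fun i : Fin nseg => M i.succ - M i.castSucc)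
    (hcover : Set.Icc zlo zhi ⊆ Set.Icc (M 0) (M (Fin.last nseg)))
    (ihi : Fin nseg) (hihi : zhi ∈ Set.Icc (M ihi.castSucc) (M ihi.succ))
    (ubar : ℝ) (hubar : ubar = sSup (σ '' Set.Icc (M ihi.castSucc) (M ihi.succ)))
    (ilo : Fin nseg) (hilo : zlo ∈ Set.Icc (M ilo.castSucc) (M ilo.succ))
    (lbar : ℝ) (hlbar : lbar = sInf (σ '' Set.Icc (M ilo.castSucc) (M ilo.succ))) :
    (sSup ((fun x => σ ((W.mulVec x + b) j)) '' {x : Fin n → ℝ | ‖x - x0‖ ≤ ε}) ≤ ubar ∧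
        ubar ≤ sSup ((fun x => σ ((W.mulVec x + b) j)) '' {x : Fin n → ℝ | ‖x - x0‖ ≤ ε})
          + (Lσ : ℝ) * Δ) ∧
      (lbar ≤ sInf ((fun x => σ ((W.mulVec x + b) j)) '' {x : Fin n → ℝ | ‖x - x0‖ ≤ ε}) ∧
        sInf ((fun x => σ ((W.mulVec x + b) j)) '' {x : Fin n → ℝ | ‖x - x0‖ ≤ ε})
          ≤ lbar + (Lσ : ℝ) * Δ) := by
  have hε' : (0:ℝ) ≤ ε := hε.le
  set xhi : Fin n → ℝ := fun k => if 0 ≤ W j k then x0 k + ε else x0 k - ε with hxhidef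
  set xlo : Fin n → ℝ := fun k => if 0 ≤ W j k then x0 k - ε else x0 k + ε with hxlodef
  have hxhi_mem : ‖xhi - x0‖ ≤ ε := by
    rw [pi_norm_le_iff_of_nonneg hε']
    intro k
    simp only [hxhidef, Pi.sub_apply]
    rcases le_or_gt 0 (W j k) with h | h
    · rw [if_pos h]; simp [Real.norm_eq_abs, abs_of_nonneg hε']
    · rw [if_neg (not_le.mpr h)]; simp [Real.norm_eq_abs, abs_of_nonneg hε']
  have hxlo_mem : ‖xlo - x0‖ ≤ ε := by
    rw [pi_norm_le_iff_of_nonneg hε']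
    intro k
    simp only [hxlodef, Pi.sub_apply]
    rcases le_or_gt 0 (W j k) with h | h
    · rw [if_pos h]; simp [Real.norm_eq_abs, abs_of_nonneg hε']
    · rw [if_neg (not_le.mpr h)]; simp [Real.norm_eq_abs, abs_of_nonneg hε']
  have hzhi_eq : (W.mulVec xhi + b) j = zhi := by
    rw [hzhi]
    simp only [Pi.add_apply, Matrix.mulVec, dotProduct, matPos, matNeg, Matrix.of_apply]
    congr 1
    rw [← Finset.sum_add_distrib]
    apply Finset.sum_congr rfl
    intro k _
    simp only [hxhidef]
    rcases le_or_gt 0 (W j k) with h | h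
    · rw [if_pos h, max_eq_left h, min_eq_right h]; ring
    · rw [if_neg (not_le.mpr h), max_eq_right h.le, min_eq_left h.le]; ring
  have hzlo_eq : (W.mulVec xlo + b) j = zlo := by
    rw [hzlo]
    simp only [Pi.add_apply, Matrix.mulVec, dotProduct, matPos, matNeg, Matrix.of_apply]
    congr 1
    rw [← Finset.sum_add_distrib]
    apply Finset.sum_congr rfl
    intro k _
    simp only [hxlodef]
    rcases le_or_gt 0 (W j k) with h | h
    · rw [if_pos h, max_eq_left h, min_eq_right h]; ring
    · rw [if_neg (not_le.mpr h), max_eq_right h.le, min_eq_left h.le]; ring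
  have habs : ∀ x : Fin n → ℝ, ‖x - x0‖ ≤ ε → ∀ k, |x k - x0 k| ≤ ε := by
    intro x hx k
    have := (pi_norm_le_iff_of_nonneg hε').mp hx k
    simpa [Real.norm_eq_abs] using this
  have hball_hi : ∀ x : Fin n → ℝ, ‖x - x0‖ ≤ ε → (W.mulVec x + b) j ≤ zhi := by
    intro x hx
    rw [← hzhi_eq]
    simp only [Pi.add_apply, add_le_add_iff_right, Matrix.mulVec, dotProduct]
    apply Finset.sum_le_sum
    intro k _
    have hk := abs_le.mp (habs x hx k)
    simp only [hxhidef]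
    rcases le_or_gt 0 (W j k) with h | h
    · rw [if_pos h]; exact mul_le_mul_of_nonneg_left (by linarith [hk.2]) h
    · rw [if_neg (not_le.mpr h)]
      exact mul_le_mul_of_nonpos_left (by linarith [hk.1]) h.le
  have hball_lo : ∀ x : Fin n → ℝ, ‖x - x0‖ ≤ ε → zlo ≤ (W.mulVec x + b) j := by
    intro x hx
    rw [← hzlo_eq]
    simp only [Pi.add_apply, add_le_add_iff_right, Matrix.mulVec, dotProduct]
    apply Finset.sum_le_sum
    intro k _
    have hk := abs_le.mp (habs x hx k)
    simp only [hxlodef]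
    rcases le_or_gt 0 (W j k) with h | h
    · rw [if_pos h]; exact mul_le_mul_of_nonneg_left (by linarith [hk.1]) h
    · rw [if_neg (not_le.mpr h)]
      exact mul_le_mul_of_nonpos_left (by linarith [hk.2]) h.le
  have hSup : IsGreatest ((fun x => σ ((W.mulVec x + b) j)) '' {x : Fin n → ℝ | ‖x - x0‖ ≤ ε})
      (σ zhi) := by
    constructor
    · exact ⟨xhi, hxhi_mem, by dsimp only; rw [hzhi_eq]⟩
    · rintro y ⟨x, hx, rfl⟩
      exact hmono (hball_hi x hx)
  have hInf : IsLeast ((fun x => σ ((W.mulVec x + b) j)) '' {x : Fin n → ℝ | ‖x - x0‖ ≤ ε})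
      (σ zlo) := by
    constructor
    · exact ⟨xlo, hxlo_mem, by dsimp only; rw [hzlo_eq]⟩
    · rintro y ⟨x, hx, rfl⟩
      exact hmono (hball_lo x hx)
  have hsupeq := hSup.csSup_eq
  have hinfeq := hInf.csInf_eq
  have hlehi : M ihi.castSucc ≤ M ihi.succ := (hM (Fin.castSucc_lt_succ (i := ihi))).le
  have hlelo : M ilo.castSucc ≤ M ilo.succ := (hM (Fin.castSucc_lt_succ (i := ilo))).le
  have hubar_eq : ubar = σ (M ihi.succ) := by
    rw [hubar]
    refine IsGreatest.csSup_eq ⟨⟨M ihi.succ, ⟨hlehi, le_refl _⟩, rfl⟩, ?_⟩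
    rintro y ⟨t, ht, rfl⟩
    exact hmono ht.2
  have hlbar_eq : lbar = σ (M ilo.castSucc) := by
    rw [hlbar]
    refine IsLeast.csInf_eq ⟨⟨M ilo.castSucc, ⟨le_refl _, hlelo⟩, rfl⟩, ?_⟩
    rintro y ⟨t, ht, rfl⟩
    exact hmono ht.1
  have hΔhi : M ihi.succ - M ihi.castSucc ≤ Δ := by
    rw [hΔ]
    exact Finset.le_sup' (fun i : Fin nseg => M i.succ - M i.castSucc) (Finset.mem_univ ihi)
  have hΔlo : M ilo.succ - M ilo.castSucc ≤ Δ := by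
    rw [hΔ]
    exact Finset.le_sup' (fun i : Fin nseg => M i.succ - M i.castSucc) (Finset.mem_univ ilo)
  have hL : (0:ℝ) ≤ (Lσ : ℝ) := Lσ.coe_nonneg
  refine ⟨⟨?_, ?_⟩, ?_, ?_⟩
  · rw [hsupeq, hubar_eq]; exact hmono hihi.2
  · rw [hsupeq, hubar_eq]
    have h1 := lip_mono_sub' hσ hihi.2
    have h2 : (Lσ : ℝ) * (M ihi.succ - zhi) ≤ (Lσ : ℝ) * Δ :=
      mul_le_mul_of_nonneg_left (by linarith [hihi.1]) hL
    linarith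
  · rw [hinfeq, hlbar_eq]; exact hmono hilo.1
  · rw [hinfeq, hlbar_eq]
    have h1 := lip_mono_sub' hσ hilo.1
    have h2 : (Lσ : ℝ) * (zlo - M ilo.castSucc) ≤ (Lσ : ℝ) * Δ :=
      mul_le_mul_of_nonneg_left (by linarith [hilo.2]) hL
    linarith
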